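/- Let (X,G) be a small Polish structure with X uncountable, and let H be a nontrivial countable group. Then there is no Polish topology on H(X) making H(X) a topological group such that the action of G on H(X), given by (g·y)(x) = y(g⁻¹x), is continuous. -/

import Mathlib

open Function

variable (X H : Type*)

/-- `H(X)`: the direct sum of copies of `H` indexed by `X`, realized as the subgroup of
the product group `X → H` consisting of finitely supported functions. -/
def FinSupp [Group H] : Subgroup (X → H) where
  carrier := {f | (Function.mulSupport f).Finite}
  one_mem' := by simp [Function.mulSupport_one]
  mul_mem' {f g} hf hg := (hf.union hg).subset (Function.mulSupport_mul f g)
  inv_mem' {f} hf := by simpa [Function.mulSupport_inv] using hf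

variable (G : Type*) [Group G] [Group H] [MulAction G X]

/-- The action of `G` on `H(X)` given by `(g • y) x = y (g⁻¹ • x)`. -/
instance : MulAction G ↥(FinSupp X H) where
  smul g y := ⟨fun x => (y : X → H) (g⁻¹ • x), by
    show (Function.mulSupport ((y : X → H) ∘ (fun x => g⁻¹ • x))).Finite
    rw [Function.mulSupport_comp_eq_preimage]
    exact y.2.preimage ((MulAction.injective (g⁻¹ : G)).injOn)⟩
  one_smul y := Subtype.ext <| funext fun x => by
    show (y : X → H) ((1 : G)⁻¹ • x) = (y : X → H) x
    rw [inv_one, one_smul]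
  mul_smul g₁ g₂ y := Subtype.ext <| funext fun x => by
    show (y : X → H) ((g₁ * g₂)⁻¹ • x) = (y : X → H) (g₂⁻¹ • g₁⁻¹ • x)
    rw [mul_inv_rev, mul_smul]

lemma smul_finSupp_apply (g : G) (y : ↥(FinSupp X H)) (x : X) :
    ((g • y : ↥(FinSupp X H)) : X → H) x = (y : X → H) (g⁻¹ • x) := rfl

/-! ### Auxiliary material -/

section Aux

open Set MeasureTheory Topology Filter MulAction TopologicalSpace Pointwise

variable {X H G}

lemma mem_finSupp_iff {f : X → H} : f ∈ FinSupp X H ↔ (mulSupport f).Finite := Iff.rfl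

lemma finSupp_coe_mul (a b : ↥(FinSupp X H)) (x : X) :
    ((a * b : ↥(FinSupp X H)) : X → H) x = (a : X → H) x * (b : X → H) x := rfl

lemma finSupp_coe_inv (a : ↥(FinSupp X H)) (x : X) :
    ((a⁻¹ : ↥(FinSupp X H)) : X → H) x = ((a : X → H) x)⁻¹ := rfl

lemma finSupp_coe_one (x : X) : ((1 : ↥(FinSupp X H)) : X → H) x = 1 := rfl

lemma finSupp_supp_finite (a : ↥(FinSupp X H)) : (mulSupport ((a : X → H))).Finite :=
  mem_finSupp_iff.mp a.2

/-- `H(X)` is uncountable when `X` is uncountable and `H` is nontrivial. -/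
lemma finSupp_uncountable [Uncountable X] [Nontrivial H] : Uncountable ↥(FinSupp X H) := by
  classical
  obtain ⟨h₀, h₀ne⟩ := exists_ne (1 : H)
  have hmem : ∀ x : X, (fun z => if z = x then h₀ else 1) ∈ FinSupp X H := by
    intro x
    rw [mem_finSupp_iff]
    apply (Set.finite_singleton x).subset
    intro z hz
    rw [mem_mulSupport] at hz
    by_contra hzx
    simp only [Set.mem_singleton_iff] at hzx
    exact hz (if_neg hzx)
  let d : X → ↥(FinSupp X H) := fun x => ⟨fun z => if z = x then h₀ else 1, hmem x⟩
  have hd : Function.Injective d := by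
    intro x x' h
    have h2 : ((d x : X → H)) x = ((d x' : X → H)) x := by rw [h]
    simp only [d, if_pos rfl] at h2
    by_contra hne
    rw [if_neg hne] at h2
    exact h₀ne h2
  exact hd.uncountable

/-- The size of the support is invariant under the `G`-action on `H(X)`. -/
lemma ncard_mulSupport_smul (g : G) (y : ↥(FinSupp X H)) :
    (mulSupport ((g • y : ↥(FinSupp X H)) : X → H)).ncard
      = (mulSupport ((y : ↥(FinSupp X H)) : X → H)).ncard := by
  have h1 : mulSupport ((g • y : ↥(FinSupp X H)) : X → H)
      = (fun x : X => g • x) '' mulSupport ((y : ↥(FinSupp X H)) : X → H) := by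
    ext x
    constructor
    · intro hx
      exact ⟨g⁻¹ • x, hx, smul_inv_smul g x⟩
    · rintro ⟨z, hz, rfl⟩
      show ((y : ↥(FinSupp X H)) : X → H) (g⁻¹ • g • z) ≠ 1
      rw [inv_smul_smul]
      exact hz
  rw [h1, Set.ncard_image_of_injective _ (MulAction.injective g)]

lemma dite_exists_congr {ι : Sort*} {α : Sort*} {p q : ι → Prop} (h : p = q)
    (d1 : Decidable (∃ i, p i)) (d2 : Decidable (∃ i, q i)) (l : ι → α) (e : α) :
    (@dite _ (∃ i, p i) d1 (fun hh => l hh.choose) fun _ => e)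
      = @dite _ (∃ i, q i) d2 (fun hh => l hh.choose) fun _ => e := by
  subst h
  rw [Subsingleton.elim d1 d2]

variable (H) in
/-- An auxiliary element of `X → H` built from a tuple of points and a tuple of labels. -/
noncomputable def phiFun {m : ℕ} (v : Fin m → X) (l : Fin m → H) : X → H :=
  open Classical in fun x => if h : ∃ i, v i = x then l h.choose else 1

lemma phiFun_mem {m : ℕ} (v : Fin m → X) (l : Fin m → H) : phiFun H v l ∈ FinSupp X H := by
  rw [mem_finSupp_iff]
  apply (Set.finite_range v).subset
  intro x hx
  by_contra hr
  apply hx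
  rw [phiFun, dif_neg]
  rintro ⟨i, hi⟩
  exact hr ⟨i, hi⟩

/-- The element of `H(X)` built from a tuple of points and a tuple of labels. -/
noncomputable def phiY {m : ℕ} (v : Fin m → X) (l : Fin m → H) : ↥(FinSupp X H) :=
  ⟨phiFun H v l, phiFun_mem v l⟩

lemma phiY_equivariant {m : ℕ} (g : G) (v : Fin m → X) (l : Fin m → H) :
    phiY (g • v) l = g • phiY v l := by
  apply Subtype.ext
  funext x
  show phiFun H (g • v) l x = phiFun H v l (g⁻¹ • x)
  have hfun : (fun i => (g • v) i = x) = (fun i => v i = g⁻¹ • x) :=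
    funext fun i => propext (by rw [Pi.smul_apply, smul_eq_iff_eq_inv_smul])
  simp only [phiFun]
  exact dite_exists_congr hfun _ _ l 1

lemma phiY_surj (y : ↥(FinSupp X H)) :
    ∃ (m : ℕ) (v : Fin m → X) (l : Fin m → H), phiY v l = y := by
  have hfin : (mulSupport ((y : ↥(FinSupp X H)) : X → H)).Finite := finSupp_supp_finite y
  refine ⟨hfin.toFinset.card, fun i => (hfin.toFinset.equivFin.symm i : X),
    fun i => ((y : ↥(FinSupp X H)) : X → H) ((hfin.toFinset.equivFin.symm i : X)), ?_⟩
  apply Subtype.ext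
  funext x
  show phiFun H (fun i => ((hfin.toFinset.equivFin.symm i : X)))
      (fun i => ((y : ↥(FinSupp X H)) : X → H) ((hfin.toFinset.equivFin.symm i : X))) x
      = ((y : ↥(FinSupp X H)) : X → H) x
  by_cases h : ∃ i, ((hfin.toFinset.equivFin.symm i : X)) = x
  · rw [phiFun, dif_pos h, h.choose_spec]
  · rw [phiFun, dif_neg h]
    symm
    by_contra hne
    have hx : x ∈ hfin.toFinset := hfin.mem_toFinset.mpr hne
    apply h
    exact ⟨hfin.toFinset.equivFin ⟨x, hx⟩, by simp⟩

/-- Well-definedness of `phiY` on orbit classes. -/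
noncomputable def phiQ (m : ℕ) (l : Fin m → H) :
    Quotient (MulAction.orbitRel G (Fin m → X)) →
      Quotient (MulAction.orbitRel G ↥(FinSupp X H)) :=
  Quotient.lift (fun v => Quotient.mk (MulAction.orbitRel G ↥(FinSupp X H)) (phiY v l)) (by
    intro v v' hvv'
    apply Quotient.sound
    have h1 : v ∈ MulAction.orbit G v' := MulAction.orbitRel_apply.mp hvv'
    obtain ⟨g, hg⟩ := MulAction.mem_orbit_iff.mp h1
    have h2 : phiY v l ∈ MulAction.orbit G (phiY v' l) :=
      MulAction.mem_orbit_iff.mpr ⟨g, by rw [← phiY_equivariant, hg]⟩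
    exact MulAction.orbitRel_apply.mpr h2)

/-- Smallness transfers from `X` to `H(X)`. -/
lemma countable_orbit_quotient [Countable H]
    (hsmall : ∀ n : ℕ, Countable (Quotient (MulAction.orbitRel G (Fin n → X)))) :
    Countable (Quotient (MulAction.orbitRel G ↥(FinSupp X H))) := by
  haveI : ∀ m : ℕ, Countable ((Fin m → H) × Quotient (MulAction.orbitRel G (Fin m → X))) := by
    intro m
    haveI := hsmall m
    infer_instance
  have hsurj : Function.Surjective
      (fun p : Σ m : ℕ, (Fin m → H) × Quotient (MulAction.orbitRel G (Fin m → X)) =>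
        phiQ p.1 p.2.1 p.2.2) := by
    intro c
    obtain ⟨y, rfl⟩ := Quotient.exists_rep c
    obtain ⟨m, v, l, hvl⟩ := phiY_surj y
    exact ⟨⟨m, l, Quotient.mk _ v⟩, by simp [phiQ, hvl]⟩
  exact hsurj.countable

/-- A nonempty open set in a Baire space is non-meager. -/
lemma nonmeager_of_isOpen {Y : Type*} [TopologicalSpace Y] [BaireSpace Y] {U : Set Y}
    (hU : IsOpen U) (hne : U.Nonempty) : ¬ IsMeagre U := by
  intro hm
  rw [IsMeagre] at hm
  obtain ⟨x, hxU, hxc⟩ := (dense_of_mem_residual hm).inter_open_nonempty U hU hne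
  exact hxc hxU

lemma isMeagre_union {Y : Type*} [TopologicalSpace Y] {s t : Set Y}
    (hs : IsMeagre s) (ht : IsMeagre t) : IsMeagre (s ∪ t) := by
  rw [IsMeagre, Set.compl_union]
  exact Filter.inter_mem hs ht

/-- In a separable topological group which is uncountable, every nonempty open set is
uncountable. -/
lemma uncountable_of_isOpen {Y : Type*} [TopologicalSpace Y] [Group Y] [IsTopologicalGroup Y]
    [TopologicalSpace.SeparableSpace Y] [Uncountable Y] {U : Set Y} (hU : IsOpen U)
    (hne : U.Nonempty) : ¬ U.Countable := by
  intro hcnt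
  obtain ⟨D, hDc, hDd⟩ := TopologicalSpace.exists_countable_dense Y
  have cover : (Set.univ : Set Y) ⊆ ⋃ d ∈ D, (fun u => u * d) '' U := by
    intro y _
    have hmap : IsOpenMap (fun u : Y => u⁻¹ * y) := by
      have h1 : (fun u : Y => u⁻¹ * y) = (fun v : Y => v * y) ∘ (fun u : Y => u⁻¹) := rfl
      rw [h1]
      exact (Homeomorph.mulRight y).isOpenMap.comp (Homeomorph.inv Y).isOpenMap
    have hopen : IsOpen ((fun u : Y => u⁻¹ * y) '' U) := hmap U hU
    have hne2 : ((fun u : Y => u⁻¹ * y) '' U).Nonempty := hne.image _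
    obtain ⟨d, hd1, hd2⟩ := hDd.inter_open_nonempty _ hopen hne2
    obtain ⟨u, huU, hud⟩ := hd1
    refine Set.mem_biUnion hd2 ⟨u, huU, ?_⟩
    rw [← hud]
    group
  have : (Set.univ : Set Y).Countable :=
    Set.Countable.mono cover (hDc.biUnion fun d _ => hcnt.image _)
  exact not_countable (Set.countable_univ_iff.mp this)

/-- A Pettis-type theorem: if `S` is a non-meager Baire measurable set in a
topological group with the Baire property, then `S * S⁻¹` is a neighborhood of `1`. -/
lemma pettis_nhds {Y : Type*} [TopologicalSpace Y] [Group Y] [IsTopologicalGroup Y] [BaireSpace Y]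
    {S : Set Y} (hBM : BaireMeasurableSet S) (hnm : ¬ IsMeagre S) :
    ∃ W : Set Y, W ∈ nhds 1 ∧ ∀ w ∈ W, ∃ a ∈ S, ∃ b ∈ S, w = a * b⁻¹ := by
  obtain ⟨U, hUopen, hUeq⟩ := hBM.residualEq_isOpen
  have hSU : IsMeagre (S \ U) := by
    rw [IsMeagre]
    refine Filter.mem_of_superset hUeq ?_
    intro x hx
    simp only [Set.mem_compl_iff, Set.mem_diff, not_and, not_not]
    intro hxS
    have hx' : (x ∈ S) = (x ∈ U) := hx
    exact Eq.mp hx' hxS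
  have hUS : IsMeagre (U \ S) := by
    rw [IsMeagre]
    refine Filter.mem_of_superset hUeq ?_
    intro x hx
    simp only [Set.mem_compl_iff, Set.mem_diff, not_and, not_not]
    intro hxU
    have hx' : (x ∈ S) = (x ∈ U) := hx
    exact Eq.mpr hx' hxU
  have hUne : U.Nonempty := by
    by_contra hem
    rw [Set.not_nonempty_iff_eq_empty] at hem
    apply hnm
    have : S \ U = S := by rw [hem, Set.diff_empty]
    rw [← this]
    exact hSU
  obtain ⟨u₀, hu₀⟩ := hUne
  refine ⟨U * U⁻¹, ?_, ?_⟩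
  · refine (hUopen.inv.mul_left).mem_nhds ?_
    have : u₀ * u₀⁻¹ ∈ U * U⁻¹ :=
      Set.mul_mem_mul hu₀ (Set.mem_inv.mpr (by rw [inv_inv]; exact hu₀))
    simpa using this
  · intro w hw
    rw [Set.mem_mul] at hw
    obtain ⟨a', ha', b', hb', hab⟩ := hw
    have hb₀ : b'⁻¹ ∈ U := Set.mem_inv.mp hb'
    have key : ∃ z, z ∈ S ∧ w * z ∈ S := by
      by_contra hcon
      push_neg at hcon
      have hNopen : IsOpen (U ∩ (fun z => w * z) ⁻¹' U) :=
        hUopen.inter (hUopen.preimage (continuous_const.mul continuous_id))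
      have hNne : (U ∩ (fun z => w * z) ⁻¹' U).Nonempty := by
        refine ⟨b'⁻¹, hb₀, ?_⟩
        show w * b'⁻¹ ∈ U
        have : w * b'⁻¹ = a' := by rw [← hab]; group
        rw [this]
        exact ha'
      have hsub : (U ∩ (fun z => w * z) ⁻¹' U) ⊆ (U \ S) ∪ (fun z => w * z) ⁻¹' (U \ S) := by
        rintro z ⟨hzU, hzwU⟩
        by_cases hzS : z ∈ S
        · right
          exact ⟨hzwU, hcon z hzS⟩
        · left
          exact ⟨hzU, hzS⟩
      have hmeag : IsMeagre ((U \ S) ∪ (fun z => w * z) ⁻¹' (U \ S)) := by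
        refine isMeagre_union hUS ?_
        exact hUS.preimage_of_isOpenMap (continuous_const.mul continuous_id)
          (Homeomorph.mulLeft w).isOpenMap
      exact nonmeager_of_isOpen hNopen hNne (hmeag.mono hsub)
    obtain ⟨z, hz, hwz⟩ := key
    exact ⟨w * z, hwz, z, hz, by group⟩

lemma mem_orbit_out_iff {Y : Type*} [MulAction G Y]
    (d : Quotient (MulAction.orbitRel G Y)) (y : Y) :
    y ∈ MulAction.orbit G (Quotient.out d) ↔ Quotient.mk (MulAction.orbitRel G Y) y = d := by
  constructor
  · intro h
    conv_rhs => rw [← Quotient.out_eq d]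
    exact Quotient.sound (MulAction.orbitRel_apply.mpr h)
  · intro h
    have h2 : Quotient.mk (MulAction.orbitRel G Y) y
        = Quotient.mk (MulAction.orbitRel G Y) (Quotient.out d) := by
      rw [h, Quotient.out_eq]
    exact MulAction.orbitRel_apply.mp (Quotient.exact h2)

end Aux

/-- Let `(X,G)` be a small Polish structure with `X` uncountable, and `H` a
nontrivial countable group. Then there is no Polish topology on `H(X)` making `H(X)` a
topological group such that the action of `G` on `H(X)`, given by `(g • y) x = y (g⁻¹ • x)`,
is continuous. -/
theorem statement6 [TopologicalSpace G] [IsTopologicalGroup G] [PolishSpace G]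
    [FaithfulSMul G X] (hstab : ∀ x : X, IsClosed {g : G | g • x = x})
    (hsmall : ∀ n : ℕ, Countable (Quotient (MulAction.orbitRel G (Fin n → X))))
    [Uncountable X] [Countable H] [Nontrivial H] :
    ¬ ∃ t : TopologicalSpace ↥(FinSupp X H),
        @PolishSpace ↥(FinSupp X H) t ∧
        @IsTopologicalGroup ↥(FinSupp X H) t _ ∧
        @Continuous (G × ↥(FinSupp X H)) ↥(FinSupp X H)
          (@instTopologicalSpaceProd G ↥(FinSupp X H) _ t) t
          (fun p => p.1 • p.2) := by
  classical
  rintro ⟨t, hPol, hTG, hCont⟩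
  letI : TopologicalSpace ↥(FinSupp X H) := t
  haveI : PolishSpace ↥(FinSupp X H) := hPol
  haveI : IsTopologicalGroup ↥(FinSupp X H) := hTG
  have hCont' : Continuous (fun p : G × ↥(FinSupp X H) => p.1 • p.2) := hCont
  haveI : BaireSpace ↥(FinSupp X H) := by
    letI := TopologicalSpace.upgradeIsCompletelyMetrizable ↥(FinSupp X H)
    infer_instance
  haveI : Nonempty ↥(FinSupp X H) := ⟨1⟩
  haveI : Uncountable ↥(FinSupp X H) := finSupp_uncountable
  letI : MeasurableSpace ↥(FinSupp X H) := borel _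
  haveI : BorelSpace ↥(FinSupp X H) := ⟨rfl⟩
  haveI hQc : Countable (Quotient (MulAction.orbitRel G ↥(FinSupp X H))) :=
    countable_orbit_quotient hsmall
  -- each orbit is analytic
  have hanal : ∀ y : ↥(FinSupp X H),
      MeasureTheory.AnalyticSet (MulAction.orbit G y) := by
    intro y
    have : MulAction.orbit G y = Set.range (fun g : G => g • y) := rfl
    rw [this]
    exact MeasureTheory.analyticSet_range_of_polishSpace
      (hCont'.comp (continuous_id.prodMk continuous_const))
  -- some orbit is non-meager
  obtain ⟨c, hc⟩ : ∃ c : Quotient (MulAction.orbitRel G ↥(FinSupp X H)),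
      ¬ IsMeagre (MulAction.orbit G (Quotient.out c)) := by
    by_contra hall
    push_neg at hall
    have hcover : (Set.univ : Set ↥(FinSupp X H))
        ⊆ ⋃ c : Quotient (MulAction.orbitRel G ↥(FinSupp X H)),
            MulAction.orbit G (Quotient.out c) := by
      intro y _
      refine Set.mem_iUnion.mpr ⟨Quotient.mk _ y, ?_⟩
      rw [mem_orbit_out_iff]
    have hmeag : IsMeagre (⋃ c : Quotient (MulAction.orbitRel G ↥(FinSupp X H)),
        MulAction.orbit G (Quotient.out c)) := by
      rw [IsMeagre, Set.compl_iUnion]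
      exact (countable_iInter_mem).mpr fun c => hall c
    have huniv : IsMeagre (Set.univ : Set ↥(FinSupp X H)) := hmeag.mono hcover
    rw [IsMeagre, Set.compl_univ] at huniv
    have hd := dense_of_mem_residual huniv
    obtain ⟨x, hx⟩ := hd.nonempty
    exact hx
  set y₀ : ↥(FinSupp X H) := Quotient.out c with hy₀
  -- the orbit of y₀ is Borel, hence Baire measurable
  have hcompl : (MulAction.orbit G y₀)ᶜ
      = ⋃ d : {d : Quotient (MulAction.orbitRel G ↥(FinSupp X H)) // d ≠ c},
          MulAction.orbit G (Quotient.out d.1) := by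
    ext y
    simp only [Set.mem_compl_iff, Set.mem_iUnion]
    constructor
    · intro hy
      refine ⟨⟨Quotient.mk _ y, ?_⟩, ?_⟩
      · intro hcc
        exact hy ((mem_orbit_out_iff c y).mpr hcc)
      · rw [mem_orbit_out_iff]
    · rintro ⟨⟨d, hd⟩, hyd⟩ hyc
      exact hd (((mem_orbit_out_iff d y).mp hyd).symm.trans ((mem_orbit_out_iff c y).mp hyc))
  have hOc_anal : MeasureTheory.AnalyticSet ((MulAction.orbit G y₀)ᶜ) := by
    rw [hcompl]
    exact MeasureTheory.AnalyticSet.iUnion fun d => hanal _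
  have hOmeas : MeasurableSet (MulAction.orbit G y₀) :=
    (hanal y₀).measurableSet_of_compl hOc_anal
  obtain ⟨W, hWnhds, hW⟩ := pettis_nhds hOmeas.baireMeasurableSet hc
  -- every element of W has support of size at most 2 * k
  set k : ℕ := (Function.mulSupport ((y₀ : ↥(FinSupp X H)) : X → H)).ncard with hk
  have hWbound : ∀ w ∈ W,
      (Function.mulSupport ((w : ↥(FinSupp X H)) : X → H)).ncard ≤ 2 * k := by
    intro w hw
    obtain ⟨a, ha, b, hb, rfl⟩ := hW w hw
    obtain ⟨g₁, hg₁⟩ := MulAction.mem_orbit_iff.mp ha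
    obtain ⟨g₂, hg₂⟩ := MulAction.mem_orbit_iff.mp hb
    have hsa : (Function.mulSupport ((a : ↥(FinSupp X H)) : X → H)).ncard = k := by
      rw [← hg₁, ncard_mulSupport_smul]
    have hsb : (Function.mulSupport ((b : ↥(FinSupp X H)) : X → H)).ncard = k := by
      rw [← hg₂, ncard_mulSupport_smul]
    have hsubset : Function.mulSupport ((a * b⁻¹ : ↥(FinSupp X H)) : X → H)
        ⊆ Function.mulSupport ((a : ↥(FinSupp X H)) : X → H)
          ∪ Function.mulSupport ((b : ↥(FinSupp X H)) : X → H) := by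
      intro x hx
      rw [Function.mem_mulSupport] at hx
      by_contra hcon
      simp only [Set.mem_union, Function.mem_mulSupport, not_or, not_not] at hcon
      apply hx
      have : ((a * b⁻¹ : ↥(FinSupp X H)) : X → H) x
          = ((a : ↥(FinSupp X H)) : X → H) x * (((b : ↥(FinSupp X H)) : X → H) x)⁻¹ := rfl
      rw [this, hcon.1, hcon.2, one_mul, inv_one]
    calc (Function.mulSupport ((a * b⁻¹ : ↥(FinSupp X H)) : X → H)).ncard
        ≤ (Function.mulSupport ((a : ↥(FinSupp X H)) : X → H)
            ∪ Function.mulSupport ((b : ↥(FinSupp X H)) : X → H)).ncard :=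
          Set.ncard_le_ncard hsubset ((finSupp_supp_finite a).union (finSupp_supp_finite b))
      _ ≤ (Function.mulSupport ((a : ↥(FinSupp X H)) : X → H)).ncard
            + (Function.mulSupport ((b : ↥(FinSupp X H)) : X → H)).ncard :=
          Set.ncard_union_le _ _
      _ = 2 * k := by rw [hsa, hsb]; ring
  -- key lemma: in every neighborhood of 1 there is a nontrivial element whose support
  -- avoids a prescribed finite set
  have hkey : ∀ (V : Set ↥(FinSupp X H)), V ∈ nhds 1 → ∀ F : Finset X,
      ∃ u : ↥(FinSupp X H), u ∈ V ∧ u ≠ 1 ∧ ∀ x ∈ F, ((u : ↥(FinSupp X H)) : X → H) x = 1 := by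
    intro V hVn F
    obtain ⟨V₁, hV₁n, hV₁mul⟩ := exists_nhds_one_split hVn
    have hV₂n : V₁ ∩ V₁⁻¹ ∈ nhds 1 := Filter.inter_mem hV₁n (inv_mem_nhds_one _ hV₁n)
    have hIne : (interior (V₁ ∩ V₁⁻¹)).Nonempty := ⟨1, mem_interior_iff_mem_nhds.mpr hV₂n⟩
    have hIunc : ¬ (interior (V₁ ∩ V₁⁻¹)).Countable :=
      uncountable_of_isOpen isOpen_interior hIne
    have hpair : ∃ w ∈ interior (V₁ ∩ V₁⁻¹), ∃ w' ∈ interior (V₁ ∩ V₁⁻¹), w ≠ w' ∧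
        ∀ x ∈ F, ((w : ↥(FinSupp X H)) : X → H) x = ((w' : ↥(FinSupp X H)) : X → H) x := by
      by_contra hcon
      push_neg at hcon
      apply hIunc
      have hinj : Function.Injective
          (fun w : ↥(interior (V₁ ∩ V₁⁻¹)) => fun x : F => (((w : ↥(FinSupp X H))) : X → H) x) := by
        intro w w' heq
        by_contra hne
        have hne' : (w : ↥(FinSupp X H)) ≠ (w' : ↥(FinSupp X H)) := fun h => hne (Subtype.ext h)
        obtain ⟨x, hxF, hxne⟩ := hcon w w.2 w' w'.2 hne'
        exact hxne (congrFun heq ⟨x, hxF⟩)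
      haveI : Countable ↥(interior (V₁ ∩ V₁⁻¹)) := hinj.countable
      exact Set.countable_coe_iff.mp this
    obtain ⟨w, hw, w', hw', hne, hagree⟩ := hpair
    have hwV₂ : w ∈ V₁ ∩ V₁⁻¹ := interior_subset hw
    have hw'V₂ : w' ∈ V₁ ∩ V₁⁻¹ := interior_subset hw'
    refine ⟨w * w'⁻¹, ?_, ?_, ?_⟩
    · exact hV₁mul w hwV₂.1 w'⁻¹ (Set.mem_inv.mp hw'V₂.2)
    · intro h
      exact hne (mul_inv_eq_one.mp h)
    · intro x hx
      have : ((w * w'⁻¹ : ↥(FinSupp X H)) : X → H) x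
          = ((w : ↥(FinSupp X H)) : X → H) x * (((w' : ↥(FinSupp X H)) : X → H) x)⁻¹ := rfl
      rw [this, hagree x hx, mul_inv_cancel]
  -- a chain of shrinking neighborhoods of 1
  have step : ∀ S : Set ↥(FinSupp X H), S ∈ nhds 1 →
      ∃ T, T ∈ nhds 1 ∧ ∀ a ∈ T, ∀ b ∈ T, a * b ∈ S := by
    intro S hS
    obtain ⟨T, hT, h⟩ := exists_nhds_one_split hS
    exact ⟨T, hT, h⟩
  choose f hf1 hf2 using step
  let Fc : {S : Set ↥(FinSupp X H) // S ∈ nhds 1} → {S : Set ↥(FinSupp X H) // S ∈ nhds 1} :=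
    fun S => ⟨f S.1 S.2, hf1 S.1 S.2⟩
  let Nc : ℕ → {S : Set ↥(FinSupp X H) // S ∈ nhds 1} := fun n => Fc^[n] ⟨W, hWnhds⟩
  let N : ℕ → Set ↥(FinSupp X H) := fun n => (Nc n).1
  have hNnhds : ∀ n, N n ∈ nhds 1 := fun n => (Nc n).2
  have hN0 : N 0 = W := rfl
  have hNmul : ∀ n, ∀ a ∈ N (n+1), ∀ b ∈ N (n+1), a * b ∈ N n := by
    intro n
    have hit : Nc (n+1) = Fc (Nc n) := Function.iterate_succ_apply' Fc n _
    have h1 : N (n+1) = f (N n) ((Nc n).2) := congrArg Subtype.val hit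
    rw [h1]
    exact hf2 (N n) ((Nc n).2)
  have hNsub : ∀ n, N (n+1) ⊆ N n := by
    intro n a ha
    have h1 : (1 : ↥(FinSupp X H)) ∈ N (n+1) := mem_of_mem_nhds (hNnhds (n+1))
    simpa using hNmul n a ha 1 h1
  -- recursively chosen elements with pairwise disjoint supports
  choose uu huuW huune huusupp using fun (n : ℕ) (Fn : Finset X) => hkey (N (n+1)) (hNnhds (n+1)) Fn
  let sf : ↥(FinSupp X H) → Finset X := fun a => (finSupp_supp_finite a).toFinset
  have hsf : ∀ (a : ↥(FinSupp X H)) (x : X), x ∈ sf a ↔ ((a : ↥(FinSupp X H)) : X → H) x ≠ 1 := by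
    intro a x
    rw [Set.Finite.mem_toFinset, Function.mem_mulSupport]
  let FF : ℕ → Finset X := fun n => Nat.rec ∅ (fun m Fm => Fm ∪ sf (uu m Fm)) n
  let u : ℕ → ↥(FinSupp X H) := fun n => uu n (FF n)
  have hFFsucc : ∀ n, FF (n+1) = FF n ∪ sf (u n) := fun n => rfl
  have hFFmono : ∀ m n, m ≤ n → FF m ⊆ FF n := by
    intro m n h
    induction n with
    | zero => simpa [Nat.le_zero.mp h] using Finset.Subset.refl _
    | succ n ih =>
      rcases Nat.lt_or_ge m (n+1) with h' | h'
      · have := ih (Nat.lt_succ_iff.mp h')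
        rw [hFFsucc]
        exact this.trans Finset.subset_union_left
      · have : m = n + 1 := le_antisymm h h'
        rw [this]
  have huN : ∀ n, u n ∈ N (n+1) := fun n => huuW n (FF n)
  have hune : ∀ n, u n ≠ 1 := fun n => huune n (FF n)
  have husuppF : ∀ n, ∀ x ∈ FF n, ((u n : ↥(FinSupp X H)) : X → H) x = 1 :=
    fun n => huusupp n (FF n)
  have hdisj : ∀ i j, i < j → ∀ x : X, ((u i : ↥(FinSupp X H)) : X → H) x ≠ 1 →
      ((u j : ↥(FinSupp X H)) : X → H) x = 1 := by
    intro i j hij x hx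
    apply husuppF j
    have hx' : x ∈ FF (i+1) := by
      rw [hFFsucc]
      exact Finset.mem_union_right _ ((hsf (u i) x).mpr hx)
    exact hFFmono (i+1) j hij hx'
  -- partial products
  let r : ℕ → ℕ → ↥(FinSupp X H) := fun n =>
    Nat.rec (motive := fun _ => ℕ → ↥(FinSupp X H)) (fun _ => 1)
      (fun _ ih j => u j * ih (j+1)) n
  have hr0 : ∀ j, r 0 j = 1 := fun _ => rfl
  have hrsucc : ∀ n j, r (n+1) j = u j * r n (j+1) := fun _ _ => rfl
  have hrN : ∀ n j, r (n+1) j ∈ N j := by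
    intro n
    induction n with
    | zero =>
      intro j
      have h1 : r (0+1) j = u j * r 0 (j+1) := rfl
      have h2 : r 0 (j+1) = 1 := rfl
      rw [h1, h2, mul_one]
      exact hNsub j (huN j)
    | succ n ih =>
      intro j
      have h1 : r (n+1+1) j = u j * r (n+1) (j+1) := rfl
      rw [h1]
      exact hNmul j (u j) (huN j) (r (n+1) (j+1)) (ih (j+1))
  have hr_one : ∀ n j (x : X),
      (∀ i, j ≤ i → i < j + n → ((u i : ↥(FinSupp X H)) : X → H) x = 1) →
      ((r n j : ↥(FinSupp X H)) : X → H) x = 1 := by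
    intro n
    induction n with
    | zero => intro j x _; rfl
    | succ n ih =>
      intro j x hx
      have hco : ((r (n+1) j : ↥(FinSupp X H)) : X → H) x
          = ((u j : ↥(FinSupp X H)) : X → H) x * ((r n (j+1) : ↥(FinSupp X H)) : X → H) x := rfl
      rw [hco, hx j le_rfl (by omega), ih (j+1) x (fun i h1 h2 => hx i (by omega) (by omega)),
        one_mul]
  have hr_eq : ∀ n j i, j ≤ i → i < j + n → ∀ x : X,
      ((u i : ↥(FinSupp X H)) : X → H) x ≠ 1 →
      ((r n j : ↥(FinSupp X H)) : X → H) x = ((u i : ↥(FinSupp X H)) : X → H) x := by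
    intro n
    induction n with
    | zero => intro j i h1 h2; omega
    | succ n ih =>
      intro j i h1 h2 x hx
      have hco : ((r (n+1) j : ↥(FinSupp X H)) : X → H) x
          = ((u j : ↥(FinSupp X H)) : X → H) x * ((r n (j+1) : ↥(FinSupp X H)) : X → H) x := rfl
      rcases eq_or_lt_of_le h1 with rfl | hlt
      · rw [hco]
        have h3 : ((r n (j+1) : ↥(FinSupp X H)) : X → H) x = 1 := by
          apply hr_one n (j+1) x
          intro i' hi1 hi2
          exact hdisj j i' (by omega) x hx
        rw [h3, mul_one]
      · rw [hco, ih (j+1) i (by omega) (by omega) x hx]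
        have h4 : ((u j : ↥(FinSupp X H)) : X → H) x = 1 := by
          by_contra hne
          exact hx (hdisj j i hlt x hne)
        rw [h4, one_mul]
  -- points in the supports
  have hx_exists : ∀ n, ∃ x : X, ((u n : ↥(FinSupp X H)) : X → H) x ≠ 1 := by
    intro n
    by_contra hcon
    push_neg at hcon
    apply hune n
    apply Subtype.ext
    funext x
    exact hcon x
  choose xp hxp using hx_exists
  have hxp_inj : Function.Injective xp := by
    intro i j hij
    by_contra hne
    rcases Ne.lt_or_gt hne with h | h
    · exact hxp j (hij ▸ hdisj i j h (xp i) (hxp i))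
    · exact hxp i (hij ▸ hdisj j i h (xp j) (hxp j))
  -- final contradiction
  have hmem : r (2*k+1) 0 ∈ W := by
    rw [← hN0]
    exact hrN (2*k) 0
  have hboundr : (Function.mulSupport ((r (2*k+1) 0 : ↥(FinSupp X H)) : X → H)).ncard ≤ 2*k :=
    hWbound _ hmem
  have hsubr : (Set.range fun i : Fin (2*k+1) => xp (i : ℕ))
      ⊆ Function.mulSupport ((r (2*k+1) 0 : ↥(FinSupp X H)) : X → H) := by
    rintro x ⟨i, rfl⟩
    rw [Function.mem_mulSupport,
      hr_eq (2*k+1) 0 (i : ℕ) (Nat.zero_le _) (by omega) (xp (i : ℕ)) (hxp (i : ℕ))]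
    exact hxp (i : ℕ)
  have h1 : (Set.range fun i : Fin (2*k+1) => xp (i : ℕ)).ncard = 2*k+1 := by
    rw [← Set.image_univ,
      Set.ncard_image_of_injective _ (fun a b hab => Fin.val_injective (hxp_inj hab)),
      Set.ncard_univ, Nat.card_eq_fintype_card, Fintype.card_fin]
  have h2 := Set.ncard_le_ncard hsubr (finSupp_supp_finite (r (2*k+1) 0))
  omega
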